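/- Let X be a topological space and S ⊆ X a subspace. Then the Kolmogorov quotient of S is homeomorphic to a subspace of the Kolmogorov quotient of X; specifically, SeparationQuotient ↥S (where S carries the subspace topology) is homeomorphic to the subspace SeparationQuotient.mk '' S of SeparationQuotient X. -/

import Mathlib

open SeparationQuotient Set

theorem separationQuotient_subspace_homeomorph {X : Type*} [TopologicalSpace X] (S : Set X) :
    Nonempty (SeparationQuotient ↥S ≃ₜ ↥(SeparationQuotient.mk '' S)) := by
  -- the underlying map
  set f : SeparationQuotient ↥S → ↥(SeparationQuotient.mk '' S) :=
    SeparationQuotient.lift (fun s => ⟨SeparationQuotient.mk s.1, s.1, s.2, rfl⟩)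
      (fun a b h => by
        apply Subtype.ext
        simpa [SeparationQuotient.mk_eq_mk] using (subtype_inseparable_iff a b).1 h) with hf
  have hfmk : ∀ s : S, (f (SeparationQuotient.mk s) : SeparationQuotient X)
      = SeparationQuotient.mk (s : X) := fun s => rfl
  have hinj : Function.Injective f := by
    intro a b hab
    obtain ⟨a, rfl⟩ := SeparationQuotient.surjective_mk a
    obtain ⟨b, rfl⟩ := SeparationQuotient.surjective_mk b
    rw [SeparationQuotient.mk_eq_mk, subtype_inseparable_iff,
      ← SeparationQuotient.mk_eq_mk]
    exact congrArg Subtype.val hab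
  have hsurj : Function.Surjective f := by
    rintro ⟨y, x, hx, rfl⟩
    exact ⟨SeparationQuotient.mk ⟨x, hx⟩, rfl⟩
  have hcont : Continuous f :=
    SeparationQuotient.continuous_lift (by continuity)
  have hopen : IsOpenMap f := by
    intro U hU
    have hW : IsOpen (SeparationQuotient.mk ⁻¹' U : Set S) := hU.preimage continuous_mk
    obtain ⟨V, hV, hVW⟩ := isOpen_induced_iff.1 hW
    have himg : f '' U = Subtype.val ⁻¹' (SeparationQuotient.mk '' V) := by
      ext ⟨y, x, hxS, rfl⟩
      simp only [mem_image, mem_preimage]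
      constructor
      · rintro ⟨u, huU, hux⟩
        obtain ⟨s, rfl⟩ := SeparationQuotient.surjective_mk u
        have hs : (s : X) ∈ V := by
          have : s ∈ (SeparationQuotient.mk ⁻¹' U : Set S) := huU
          rw [← hVW] at this; exact this
        exact ⟨s, hs, congrArg Subtype.val hux⟩
      · rintro ⟨v, hv, hvx⟩
        have hxV : x ∈ V := by
          have := SeparationQuotient.mk_eq_mk.1 hvx
          exact (this.mem_open_iff hV).1 hv
        refine ⟨SeparationQuotient.mk ⟨x, hxS⟩, ?_, rfl⟩
        have : (⟨x, hxS⟩ : S) ∈ (Subtype.val ⁻¹' V : Set S) := hxV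
        rw [hVW] at this; exact this
    rw [himg]
    exact (SeparationQuotient.isOpenMap_mk V hV).preimage continuous_subtype_val
  exact ⟨Equiv.toHomeomorphOfContinuousOpen (Equiv.ofBijective f ⟨hinj, hsurj⟩) hcont hopen⟩
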